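/- arXiv:2009.13648 — 2 statements merged into one kernel-verified Lean document; each statement's English description precedes it below -/
import Mathlib

section
/- For any real k×ℓ matrix A, exactly one of the following two alternatives holds: (i) there exists a vector v ∈ ℝ^k such that every entry of the row vector vᵀA is strictly positive; (ii) there exists a nonzero vector u ∈ ℝ^ℓ with all entries nonnegative such that A u = 0. In particular, (i) and (ii) cannot both hold, and at least one of them holds. -/
/-- **Gordan's theorem.** For any real `k × ℓ` matrix `A`, exactly one of the following
holds: (i) there is a vector `v ∈ ℝ^k` such that every entry of the row vector `vᵀA`
is strictly positive; (ii) there is a nonzero vector `u ∈ ℝ^ℓ` with all entries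
nonnegative such that `A u = 0`. -/
theorem gordan_theorem (k l : ℕ) (A : Matrix (Fin k) (Fin l) ℝ) :
    Xor'
      (∃ v : Fin k → ℝ, ∀ j : Fin l, 0 < Matrix.vecMul v A j)
      (∃ u : Fin l → ℝ, u ≠ 0 ∧ (∀ j : Fin l, 0 ≤ u j) ∧ A.mulVec u = 0) := by
  -- exclusivity
  have hexcl : ¬ ((∃ v : Fin k → ℝ, ∀ j : Fin l, 0 < Matrix.vecMul v A j) ∧
      (∃ u : Fin l → ℝ, u ≠ 0 ∧ (∀ j : Fin l, 0 ≤ u j) ∧ A.mulVec u = 0)) := by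
    rintro ⟨⟨v, hv⟩, u, hu0, hunn, hAu⟩
    have key : dotProduct (Matrix.vecMul v A) u = dotProduct v (A.mulVec u) := (Matrix.dotProduct_mulVec v A u).symm
    rw [hAu, dotProduct_zero] at key
    -- key : vecMul v A ⬝ᵥ u = 0, but each term ≥ 0 and some term > 0
    obtain ⟨j, hj⟩ : ∃ j, u j ≠ 0 := by
      by_contra h; push_neg at h; exact hu0 (funext h)
    have hpos : 0 < dotProduct (Matrix.vecMul v A) u := by
      apply Finset.sum_pos' (fun i _ => mul_nonneg (hv i).le (hunn i))
      exact ⟨j, Finset.mem_univ j, mul_pos (hv j) (lt_of_le_of_ne (hunn j) (Ne.symm hj))⟩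
    exact hpos.ne' key
  rcases Classical.em (∃ u : Fin l → ℝ, u ≠ 0 ∧ (∀ j : Fin l, 0 ≤ u j) ∧ A.mulVec u = 0) with h2 | h2
  · exact Or.inr ⟨h2, fun h1 => hexcl ⟨h1, h2⟩⟩
  · left
    refine ⟨?_, fun h => hexcl ⟨?_, h⟩⟩
    swap
    · exact absurd h h2
    -- existence of v
    set C : Set (Fin k → ℝ) := A.mulVec '' stdSimplex ℝ (Fin l) with hC
    have hconv : Convex ℝ C := (convex_stdSimplex ℝ (Fin l)).linear_image (Matrix.mulVecLin A)
    have hcomp : IsCompact C := (isCompact_stdSimplex ℝ (Fin l)).image (A.mulVecLin.continuous_of_finiteDimensional)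
    have h0 : (0 : Fin k → ℝ) ∉ C := by
      rintro ⟨u, hu, hAu⟩
      refine h2 ⟨u, ?_, hu.1, hAu⟩
      intro hu0
      simpa [hu0] using hu.2
    obtain ⟨f, c, hfc, hc0⟩ := geometric_hahn_banach_closed_point hconv hcomp.isClosed h0
    rw [map_zero] at hc0
    refine ⟨fun i => -f (Pi.single i 1), fun j => ?_⟩
    have hcol : (fun i => A i j) ∈ C :=
      ⟨Pi.single j 1, single_mem_stdSimplex ℝ j, by
        funext i; simp [Matrix.mulVec_single]⟩
    have hlt : f (fun i => A i j) < 0 := lt_trans (hfc _ hcol) hc0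
    have : Matrix.vecMul (fun i => -f (Pi.single i 1)) A j = -f (fun i => A i j) := by
      have : (fun i => A i j) = ∑ i, A i j • (Pi.single i 1 : Fin k → ℝ) := by
        funext i'
        simp [Finset.sum_apply, Pi.single_apply, mul_comm]
      rw [this, map_sum]
      simp [Matrix.vecMul, dotProduct, mul_comm, Finset.sum_neg_distrib]
    rw [this]
    linarith
end

section
/- There is no vector v ∈ ℝ³ such that every entry of the row vector vᵀM is strictly positive, where M is the 3×10 real matrix whose columns are (1000, 0, 0), (845, −535, 0), (−98, −991, 94), (−515, −639, 572), (270, −75, 960), (946, −125, 301), (885, 165, −435), (299, 465, −833), (−300, 944, −135), (182, 877, 444). Equivalently, the nonnegative nonzero vector u = (1, 1, 8061667015, 1, 1, 1, 496072961, 2237736971, 3514960071, 4046282755) satisfies M u = 0. -/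
/-- The explicit `3 × 10` matrix from equation (2) of the paper, whose `i`-th column
is `(−1)^{i+1} eᵢ` for the edge vectors of a 10-stick realization of the knot `8₅`. -/
noncomputable def M85 : Matrix (Fin 3) (Fin 10) ℝ :=
  !![1000, 845, -98, -515, 270, 946, 885, 299, -300, 182;
     0, -535, -991, -639, -75, -125, 165, 465, 944, 877;
     0, 0, 94, 572, 960, 301, -435, -833, -135, 444]

/-- The certificate vector `u`. -/
noncomputable def u85 : Fin 10 → ℝ :=
  ![1, 1, 8061667015, 1, 1, 1, 496072961, 2237736971, 3514960071, 4046282755]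

/-- There is no `v ∈ ℝ³` with all entries of `vᵀM` strictly positive; equivalently,
the nonnegative nonzero vector `u` satisfies `M u = 0`. -/
theorem no_positive_row_vector_for_8_5 :
    (¬ ∃ v : Fin 3 → ℝ, ∀ j : Fin 10, 0 < Matrix.vecMul v M85 j) ∧
    (u85 ≠ 0 ∧ (∀ j : Fin 10, 0 ≤ u85 j) ∧ M85.mulVec u85 = 0) := by
  have hu0 : ∀ j : Fin 10, 0 ≤ u85 j := by
    intro j
    fin_cases j <;> norm_num [u85]
  have hmv : M85.mulVec u85 = 0 := by
    funext i
    fin_cases i <;>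
      simp [M85, u85, Matrix.mulVec, dotProduct, Fin.sum_univ_succ] <;> ring
  refine ⟨?_, ?_, hu0, hmv⟩
  · rintro ⟨v, hv⟩
    have key : dotProduct (Matrix.vecMul v M85) u85 = 0 := by
      rw [← Matrix.dotProduct_mulVec, hmv, dotProduct_zero]
    have hpos : 0 < dotProduct (Matrix.vecMul v M85) u85 := by
      have h2 : 0 < u85 2 := by rw [show u85 2 = 8061667015 from rfl]; norm_num
      have := Finset.sum_pos' (s := Finset.univ)
        (f := fun j => Matrix.vecMul v M85 j * u85 j)
        (fun j _ => mul_nonneg (hv j).le (hu0 j))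
        ⟨2, Finset.mem_univ _, mul_pos (hv 2) h2⟩
      simpa [dotProduct] using this
    exact absurd key hpos.ne'
  · intro h
    have : u85 0 = 0 := congrFun h 0
    norm_num [u85] at this
end
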